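/- Let p be an odd prime, d ≥ 1, and G = (ℤ_p)^d ⋊ ℤ₂ with the ℤ₂ factor acting by inversion. Then the set S of all involutions of G equals G \ (ℤ_p)^d, has size p^d, and Aut(G, S) = Aut(G) ≅ AGL(d, p) acts 2-transitively on S. -/

import Mathlib

lemma exists_linEquiv {K V : Type*} [Field K] [AddCommGroup V] [Module K V] {u w : V}
    (hu : u ≠ 0) (hw : w ≠ 0) : ∃ L : V ≃ₗ[K] V, L u = w := by
  classical
  have hiu : LinearIndepOn K id ({u} : Set V) := LinearIndepOn.singleton (v := id) hu
  have hiw : LinearIndepOn K id ({w} : Set V) := LinearIndepOn.singleton (v := id) hw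
  let bu := Module.Basis.extend hiu
  let bw := Module.Basis.extend hiw
  have hu' : u ∈ hiu.extend (Set.subset_univ _) := hiu.subset_extend _ rfl
  have hw' : w ∈ hiw.extend (Set.subset_univ _) := hiw.subset_extend _ rfl
  let σ : _ ≃ _ := bu.indexEquiv bw
  let σ' := σ.trans (Equiv.swap (σ ⟨u, hu'⟩) ⟨w, hw'⟩)
  refine ⟨bu.equiv bw σ', ?_⟩
  have h1 : (⟨u, hu'⟩ : hiu.extend (Set.subset_univ _)) = bu ⟨u, hu'⟩ :=
    (Module.Basis.extend_apply_self hiu ⟨u, hu'⟩).symm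
  calc (bu.equiv bw σ') u = (bu.equiv bw σ') (bu ⟨u, hu'⟩) := by
        rw [Module.Basis.extend_apply_self]
    _ = bw (σ' ⟨u, hu'⟩) := bu.equiv_apply _ bw σ'
    _ = bw ⟨w, hw'⟩ := by simp [σ', Equiv.swap_apply_left]
    _ = w := Module.Basis.extend_apply_self hiw ⟨w, hw'⟩

section Aux

variable {p d : ℕ} {G : Type*} [Group G] {N : Subgroup G}
  (φ : ↥N ≃* Multiplicative (Fin d → ZMod p)) {z : G}

local notation "V" => Fin d → ZMod p

def iot (v : V) : G := ((φ.symm (Multiplicative.ofAdd v) : ↥N) : G)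

lemma iot_mem (v : V) : iot φ v ∈ N := (φ.symm (Multiplicative.ofAdd v)).2

lemma iot_add (v w : V) : iot φ (v + w) = iot φ v * iot φ w := by
  unfold iot
  rw [show Multiplicative.ofAdd (v + w) = Multiplicative.ofAdd v * Multiplicative.ofAdd w from rfl,
    map_mul]
  rfl

lemma iot_zero : iot φ (0 : V) = 1 := by
  unfold iot
  rw [show Multiplicative.ofAdd (0 : V) = 1 from rfl, map_one]
  rfl

lemma iot_neg (v : V) : iot φ (-v) = (iot φ v)⁻¹ := by
  unfold iot
  rw [show Multiplicative.ofAdd (-v) = (Multiplicative.ofAdd v)⁻¹ from rfl, map_inv]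
  rfl

lemma iot_comm (v w : V) : iot φ v * iot φ w = iot φ w * iot φ v := by
  rw [← iot_add, ← iot_add, add_comm]

lemma iot_inj {v w : V} (h : iot φ v = iot φ w) : v = w := by
  have := φ.symm.injective (Subtype.ext h)
  exact Multiplicative.ofAdd.injective this

lemma iot_surj {n : G} (h : n ∈ N) : ∃ v : V, iot φ v = n :=
  ⟨Multiplicative.toAdd (φ ⟨n, h⟩), by unfold iot; simp⟩

variable (hz2 : z * z = 1) (hzN : z ∉ N)
  (hinv : ∀ n ∈ N, z * n * z = n⁻¹)
  (hgen : ∀ g : G, g ∈ N ∨ g * z ∈ N)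

include hz2 hinv in
lemma z_iot (v : V) : z * iot φ v = iot φ (-v) * z := by
  have h := hinv (iot φ v) (iot_mem φ v)
  rw [iot_neg]
  have : z * iot φ v * z * z = (iot φ v)⁻¹ * z := by rw [h]
  rwa [mul_assoc, hz2, mul_one] at this

include hzN in
lemma iotz_not_mem (v : V) : iot φ v * z ∉ N := fun h =>
  hzN (by simpa using N.mul_mem (N.inv_mem (iot_mem φ v)) h)

include hz2 hgen in
lemma not_mem_decomp {g : G} (h : g ∉ N) : ∃ v : V, g = iot φ v * z := by
  rcases hgen g with h' | h'
  · exact absurd h' h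
  · obtain ⟨v, hv⟩ := iot_surj φ h'
    exact ⟨v, by rw [hv, mul_assoc, hz2, mul_one]⟩

include hz2 hgen in
lemma decomp (g : G) : (∃ v : V, g = iot φ v) ∨ ∃ v : V, g = iot φ v * z := by
  by_cases h : g ∈ N
  · obtain ⟨v, hv⟩ := iot_surj φ h
    exact Or.inl ⟨v, hv.symm⟩
  · exact Or.inr (not_mem_decomp φ hz2 hgen h)

include hz2 hinv in
lemma iotz_mul_iot (v w : V) : (iot φ v * z) * iot φ w = iot φ (v - w) * z := by
  rw [mul_assoc, z_iot φ hz2 hinv, ← mul_assoc, ← iot_add, ← sub_eq_add_neg]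

include hz2 hinv in
lemma iotz_mul_iotz (v w : V) : (iot φ v * z) * (iot φ w * z) = iot φ (v - w) := by
  rw [← mul_assoc, iotz_mul_iot φ hz2 hinv, mul_assoc, hz2, mul_one]

open Classical in
noncomputable def crd (g : G) : V :=
  if h : g ∈ N then Multiplicative.toAdd (φ ⟨g, h⟩) else 0

lemma crd_spec {g : G} (h : g ∈ N) : iot φ (crd φ g) = g := by
  unfold crd iot
  rw [dif_pos h]
  simp

lemma crd_iot (v : V) : crd φ (iot φ v) = v :=
  iot_inj φ (crd_spec φ (iot_mem φ v))

open Classical in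
noncomputable def tfun (L : V ≃ₗ[ZMod p] V) (c : V) (g : G) : G :=
  if g ∈ N then iot φ (L (crd φ g)) else iot φ (L (crd φ (g * z)) + c) * z

lemma tfun_iot (L : V ≃ₗ[ZMod p] V) (c : V) (v : V) :
    tfun φ (z := z) L c (iot φ v) = iot φ (L v) := by
  unfold tfun
  rw [if_pos (iot_mem φ v), crd_iot]

include hz2 hzN in
lemma tfun_iotz (L : V ≃ₗ[ZMod p] V) (c : V) (v : V) :
    tfun φ (z := z) L c (iot φ v * z) = iot φ (L v + c) * z := by
  unfold tfun
  rw [if_neg (iotz_not_mem φ hzN v), mul_assoc, hz2, mul_one, crd_iot]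

include hz2 hzN hinv hgen in
lemma tfun_mul (L : V ≃ₗ[ZMod p] V) (c : V) (a b : G) :
    tfun φ (z := z) L c (a * b) = tfun φ (z := z) L c a * tfun φ (z := z) L c b := by
  rcases decomp φ hz2 hgen a with ⟨v, rfl⟩ | ⟨v, rfl⟩ <;>
    rcases decomp φ hz2 hgen b with ⟨w, rfl⟩ | ⟨w, rfl⟩
  · rw [← iot_add, tfun_iot, tfun_iot, tfun_iot, map_add, iot_add]
  · rw [← mul_assoc, ← iot_add, tfun_iotz φ hz2 hzN, tfun_iot, tfun_iotz φ hz2 hzN, ← mul_assoc,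
      ← iot_add, map_add, add_assoc]
  · rw [iotz_mul_iot φ hz2 hinv, tfun_iotz φ hz2 hzN, tfun_iotz φ hz2 hzN, tfun_iot,
      iotz_mul_iot φ hz2 hinv]
    congr 2
    rw [map_sub]
    abel
  · rw [iotz_mul_iotz φ hz2 hinv, tfun_iot, tfun_iotz φ hz2 hzN, tfun_iotz φ hz2 hzN,
      iotz_mul_iotz φ hz2 hinv]
    congr 1
    rw [map_sub]
    abel

include hz2 hzN hinv hgen in
lemma tfun_injective (L : V ≃ₗ[ZMod p] V) (c : V) :
    Function.Injective (tfun φ (z := z) L c) := by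
  apply (injective_iff_map_eq_one
    (MonoidHom.mk' (tfun φ (z := z) L c) (tfun_mul φ hz2 hzN hinv hgen L c))).mpr
  intro g hg
  rcases decomp φ hz2 hgen g with ⟨v, rfl⟩ | ⟨v, rfl⟩
  · rw [MonoidHom.mk'_apply, tfun_iot] at hg
    have h0 : L v = 0 := by
      have : iot φ (L v) = iot φ 0 := by rw [hg, iot_zero]
      exact iot_inj φ this
    rw [LinearEquiv.map_eq_zero_iff] at h0
    rw [h0, iot_zero]
  · rw [MonoidHom.mk'_apply, tfun_iotz φ hz2 hzN] at hg
    exact absurd (hg.symm ▸ N.one_mem) (iotz_not_mem φ hzN _)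

noncomputable def Tmap [Finite G] (L : V ≃ₗ[ZMod p] V) (c : V) : MulAut G :=
  MulEquiv.ofBijective
    (MonoidHom.mk' (tfun φ (z := z) L c) (tfun_mul φ hz2 hzN hinv hgen L c))
    (Finite.injective_iff_bijective.mp (tfun_injective φ hz2 hzN hinv hgen L c))

lemma Tmap_iot [Finite G] (L : V ≃ₗ[ZMod p] V) (c : V) (v : V) :
    Tmap φ hz2 hzN hinv hgen L c (iot φ v) = iot φ (L v) :=
  tfun_iot φ L c v

lemma Tmap_iotz [Finite G] (L : V ≃ₗ[ZMod p] V) (c : V) (v : V) :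
    Tmap φ hz2 hzN hinv hgen L c (iot φ v * z) = iot φ (L v + c) * z :=
  tfun_iotz φ hz2 hzN L c v

include φ in
lemma mem_sq_one (hp : p.Prime) (hodd : p ≠ 2) {g : G} (hg : g ∈ N) (h : g * g = 1) :
    g = 1 := by
  haveI : Fact p.Prime := ⟨hp⟩
  obtain ⟨v, rfl⟩ := iot_surj φ hg
  have hv : v + v = 0 := by
    apply iot_inj φ
    rw [iot_add, iot_zero, h]
  have h2 : (2 : ZMod p) ≠ 0 := by
    intro h2
    have : (p : ℕ) ∣ 2 := by
      have := (ZMod.natCast_eq_zero_iff 2 p).mp (by exact_mod_cast h2)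
      exact this
    exact hodd ((Nat.prime_dvd_prime_iff_eq hp Nat.prime_two).mp this)
  have : v = 0 := by
    funext i
    have := congrFun hv i
    have h2v : (2 : ZMod p) * v i = 0 := by rw [two_mul]; exact this
    rcases mul_eq_zero.mp h2v with h' | h'
    · exact absurd h' h2
    · exact h'
  rw [this, iot_zero]

include φ hz2 hinv hgen in
lemma not_mem_sq {g : G} (hg : g ∉ N) : g * g = 1 := by
  obtain ⟨v, rfl⟩ := not_mem_decomp φ hz2 hgen hg
  rw [iotz_mul_iotz φ hz2 hinv, sub_self, iot_zero]

include φ hz2 hinv hgen in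
lemma aut_mem (hp : p.Prime) (hodd : p ≠ 2) (τ : MulAut G) {g : G} (hg : g ∈ N) :
    τ g ∈ N := by
  by_contra h
  have h2 : τ g * τ g = 1 := not_mem_sq φ hz2 hinv hgen h
  have hgg : g * g = 1 := τ.injective (by rw [map_mul, h2, map_one])
  have hg1 : g = 1 := mem_sq_one φ hp hodd hg hgg
  rw [hg1, map_one] at h
  exact h N.one_mem

include φ hz2 hinv hgen in
lemma aut_not_mem (hp : p.Prime) (hodd : p ≠ 2) (τ : MulAut G) {s : G} (hs : s ∉ N) :
    τ s ∉ N := by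
  intro h
  apply hs
  have := aut_mem φ hz2 hinv hgen hp hodd τ⁻¹ h
  simpa using this

end Aux

section Aux2

variable {p d : ℕ} {G : Type*} [Group G] {N : Subgroup G}
  (φ : ↥N ≃* Multiplicative (Fin d → ZMod p)) {z : G}

local notation "V" => Fin d → ZMod p

noncomputable def resAut (hp : p.Prime) (hodd : p ≠ 2)
    (hz2 : z * z = 1) (hinv : ∀ n ∈ N, z * n * z = n⁻¹)
    (hgen : ∀ g : G, g ∈ N ∨ g * z ∈ N) (τ : MulAut G) : ↥N ≃* ↥N where
  toFun n := ⟨τ n, aut_mem φ hz2 hinv hgen hp hodd τ n.2⟩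
  invFun n := ⟨τ⁻¹ n, aut_mem φ hz2 hinv hgen hp hodd τ⁻¹ n.2⟩
  left_inv n := by ext; exact τ.symm_apply_apply _
  right_inv n := by ext; exact τ.apply_symm_apply _
  map_mul' a b := by ext; exact map_mul τ _ _

lemma aequiv_smul (hp : p.Prime) (A : V ≃+ V)
    (c : ZMod p) (x : V) : A (c • x) = c • A x := by
  haveI : NeZero p := ⟨hp.pos.ne'⟩
  obtain ⟨m, rfl⟩ := ZMod.natCast_zmod_surjective (n := p) c
  rw [Nat.cast_smul_eq_nsmul, Nat.cast_smul_eq_nsmul, map_nsmul]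

noncomputable def LinE (hp : p.Prime) (hodd : p ≠ 2)
    (hz2 : z * z = 1) (hinv : ∀ n ∈ N, z * n * z = n⁻¹)
    (hgen : ∀ g : G, g ∈ N ∨ g * z ∈ N) (τ : MulAut G) : V ≃ₗ[ZMod p] V :=
  AddEquiv.toLinearEquiv
    (MulEquiv.toAdditive (φ.symm.trans ((resAut φ hp hodd hz2 hinv hgen τ).trans φ)))
    (aequiv_smul hp _)

lemma tau_iot (hp : p.Prime) (hodd : p ≠ 2)
    (hz2 : z * z = 1) (hinv : ∀ n ∈ N, z * n * z = n⁻¹)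
    (hgen : ∀ g : G, g ∈ N ∨ g * z ∈ N) (τ : MulAut G) (v : V) :
    τ (iot φ v) = iot φ (LinE φ hp hodd hz2 hinv hgen τ v) := by
  have h : (LinE φ hp hodd hz2 hinv hgen τ) v
      = Multiplicative.toAdd (φ ((resAut φ hp hodd hz2 hinv hgen τ)
          (φ.symm (Multiplicative.ofAdd v)))) := rfl
  rw [h]
  simp only [iot, ofAdd_toAdd, MulEquiv.symm_apply_apply]
  rfl

noncomputable def cvec (τ : MulAut G) : V := crd φ (τ z * z)

lemma iot_cvec (hp : p.Prime) (hodd : p ≠ 2)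
    (hz2 : z * z = 1) (hzN : z ∉ N) (hinv : ∀ n ∈ N, z * n * z = n⁻¹)
    (hgen : ∀ g : G, g ∈ N ∨ g * z ∈ N) (τ : MulAut G) :
    iot φ (cvec φ (z := z) τ) = τ z * z := by
  rcases hgen (τ z) with h | h
  · exact absurd h (aut_not_mem φ hz2 hinv hgen hp hodd τ hzN)
  · exact crd_spec φ h

lemma tau_z (hp : p.Prime) (hodd : p ≠ 2)
    (hz2 : z * z = 1) (hzN : z ∉ N) (hinv : ∀ n ∈ N, z * n * z = n⁻¹)
    (hgen : ∀ g : G, g ∈ N ∨ g * z ∈ N) (τ : MulAut G) :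
    τ z = iot φ (cvec φ (z := z) τ) * z := by
  rw [iot_cvec φ hp hodd hz2 hzN hinv hgen τ, mul_assoc, hz2, mul_one]

noncomputable def Phi (hp : p.Prime) (hodd : p ≠ 2)
    (hz2 : z * z = 1) (hinv : ∀ n ∈ N, z * n * z = n⁻¹)
    (hgen : ∀ g : G, g ∈ N ∨ g * z ∈ N) (τ : MulAut G) : V ≃ᵃ[ZMod p] V :=
  (LinE φ hp hodd hz2 hinv hgen τ).toAffineEquiv.trans
    (AffineEquiv.constVAdd (ZMod p) V (cvec φ (z := z) τ))

lemma Phi_apply (hp : p.Prime) (hodd : p ≠ 2)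
    (hz2 : z * z = 1) (hinv : ∀ n ∈ N, z * n * z = n⁻¹)
    (hgen : ∀ g : G, g ∈ N ∨ g * z ∈ N) (τ : MulAut G) (v : V) :
    Phi φ hp hodd hz2 hinv hgen τ v =
      cvec φ (z := z) τ + LinE φ hp hodd hz2 hinv hgen τ v := rfl

lemma iot_Phi (hp : p.Prime) (hodd : p ≠ 2)
    (hz2 : z * z = 1) (hzN : z ∉ N) (hinv : ∀ n ∈ N, z * n * z = n⁻¹)
    (hgen : ∀ g : G, g ∈ N ∨ g * z ∈ N) (τ : MulAut G) (v : V) :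
    iot φ (Phi φ hp hodd hz2 hinv hgen τ v) = τ (iot φ v * z) * z := by
  rw [Phi_apply, iot_add, map_mul τ, tau_iot φ hp hodd hz2 hinv hgen,
    tau_z φ hp hodd hz2 hzN hinv hgen, iot_comm]
  rw [mul_assoc, mul_assoc, hz2, mul_one]

end Aux2

/-- Let `p` be an odd prime, `d ≥ 1`, and `G = (ℤ_p)^d ⋊ ℤ₂`
with the `ℤ₂`-factor (generated by `z`) acting by inversion on `N ≅ (ℤ_p)^d`.
Then the set `S` of all involutions of `G` equals `G \ N`, has size `p^d`,
every automorphism of `G` preserves `S` (so `Aut(G,S) = Aut(G)`),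
`Aut(G) ≅ AGL(d,p)`, and `Aut(G)` acts 2-transitively on `S`. -/
theorem stmt9 (p d : ℕ) (hp : p.Prime) (hodd : p ≠ 2) (hd : 1 ≤ d)
    {G : Type*} [Group G] [Finite G] (N : Subgroup G)
    (hN : Nonempty (↥N ≃* Multiplicative (Fin d → ZMod p)))
    (z : G) (hz2 : z * z = 1) (hzN : z ∉ N)
    (hinv : ∀ n ∈ N, z * n * z = n⁻¹)
    (hgen : ∀ g : G, g ∈ N ∨ g * z ∈ N) :
    ({g : G | g * g = 1 ∧ g ≠ 1} = {g : G | g ∉ N}) ∧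
    Nat.card {g : G | g ∉ N} = p ^ d ∧
    (∀ τ : MulAut G, ∀ s : G, s ∉ N → τ s ∉ N) ∧
    Nonempty (MulAut G ≃* ((Fin d → ZMod p) ≃ᵃ[ZMod p] (Fin d → ZMod p))) ∧
    (∀ a b c e : G, a ∉ N → b ∉ N → c ∉ N → e ∉ N → a ≠ b → c ≠ e →
      ∃ τ : MulAut G, τ a = c ∧ τ b = e) := by
  obtain ⟨φ⟩ := hN
  haveI : Fact p.Prime := ⟨hp⟩
  refine ⟨?_, ?_, ?_, ?_, ?_⟩
  · -- part 1
    ext g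
    simp only [Set.mem_setOf_eq]
    constructor
    · rintro ⟨hsq, hne⟩ hmem
      exact hne (mem_sq_one φ hp hodd hmem hsq)
    · intro hmem
      exact ⟨not_mem_sq φ hz2 hinv hgen hmem,
        fun h => hmem (h ▸ N.one_mem)⟩
  · -- part 2
    have e : ↥N ≃ {g : G | g ∉ N} :=
      { toFun := fun n => ⟨(n : G) * z, fun h => hzN (by
          simpa using N.mul_mem (N.inv_mem n.2) h)⟩
        invFun := fun g => ⟨(g : G) * z, by
          rcases hgen g with h | h
          · exact absurd h g.2
          · exact h⟩
        left_inv := fun n => by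
          ext; simp [mul_assoc, hz2]
        right_inv := fun g => by
          ext; simp [mul_assoc, hz2] }
    rw [← Nat.card_congr e, Nat.card_congr φ.toEquiv]
    simp [Nat.card_fun, Nat.card_zmod, Nat.card_eq_fintype_card]
  · -- part 3
    intro τ s hs
    exact aut_not_mem φ hz2 hinv hgen hp hodd τ hs
  · -- part 4
    have hmul : ∀ σ τ : MulAut G, Phi φ hp hodd hz2 hinv hgen (σ * τ)
        = Phi φ hp hodd hz2 hinv hgen σ * Phi φ hp hodd hz2 hinv hgen τ := by
      intro σ τ
      apply AffineEquiv.ext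
      intro v
      apply iot_inj φ
      have h1 : (Phi φ hp hodd hz2 hinv hgen σ * Phi φ hp hodd hz2 hinv hgen τ) v
          = Phi φ hp hodd hz2 hinv hgen σ (Phi φ hp hodd hz2 hinv hgen τ v) := rfl
      rw [h1, iot_Phi φ hp hodd hz2 hzN hinv hgen, iot_Phi φ hp hodd hz2 hzN hinv hgen,
        iot_Phi φ hp hodd hz2 hzN hinv hgen, mul_assoc, hz2, mul_one, MulAut.mul_apply]
    set Φhom := MonoidHom.mk' (fun τ => Phi φ hp hodd hz2 hinv hgen τ) hmul with hΦ
    have hinj : Function.Injective Φhom := by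
      apply (injective_iff_map_eq_one Φhom).mpr
      intro τ h
      have hv : ∀ v : Fin d → ZMod p, Phi φ hp hodd hz2 hinv hgen τ v = v := by
        intro v
        have : Φhom τ v = (1 : (Fin d → ZMod p) ≃ᵃ[ZMod p] (Fin d → ZMod p)) v := by rw [h]
        exact this
      have hfix : ∀ v : Fin d → ZMod p, τ (iot φ v * z) = iot φ v * z := by
        intro v
        have h2 : τ (iot φ v * z) * z = iot φ v := by
          rw [← iot_Phi φ hp hodd hz2 hzN hinv hgen, hv]
        calc τ (iot φ v * z) = τ (iot φ v * z) * z * z := by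
              rw [mul_assoc, hz2, mul_one]
          _ = iot φ v * z := by rw [h2]
      apply DFunLike.ext
      intro g
      show τ g = g
      rcases decomp φ hz2 hgen g with ⟨v, rfl⟩ | ⟨v, rfl⟩
      · have hdec : iot φ v = (iot φ v * z) * (iot φ 0 * z) := by
          rw [iotz_mul_iotz φ hz2 hinv, sub_zero]
        rw [hdec, map_mul, hfix, hfix]
      · exact hfix v
    have hsurj : Function.Surjective Φhom := by
      intro ψ
      refine ⟨Tmap φ hz2 hzN hinv hgen ψ.linear (ψ 0), ?_⟩
      apply AffineEquiv.ext
      intro v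
      apply iot_inj φ
      show iot φ (Phi φ hp hodd hz2 hinv hgen _ v) = iot φ (ψ v)
      rw [iot_Phi φ hp hodd hz2 hzN hinv hgen, Tmap_iotz φ hz2 hzN hinv hgen,
        mul_assoc, hz2, mul_one]
      have hψ : ψ v = ψ.linear v + ψ 0 := by
        have h := ψ.toAffineMap.map_vadd (0 : Fin d → ZMod p) v
        simpa [vadd_eq_add] using h
      rw [hψ]
    exact ⟨MulEquiv.ofBijective Φhom ⟨hinj, hsurj⟩⟩
  · -- part 5
    intro a b c e ha hb hc he hab hce
    obtain ⟨va, rfl⟩ := not_mem_decomp φ hz2 hgen ha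
    obtain ⟨vb, rfl⟩ := not_mem_decomp φ hz2 hgen hb
    obtain ⟨vc, rfl⟩ := not_mem_decomp φ hz2 hgen hc
    obtain ⟨ve, rfl⟩ := not_mem_decomp φ hz2 hgen he
    have hu : vb - va ≠ 0 := by
      intro h
      apply hab
      rw [sub_eq_zero] at h
      rw [h]
    have hw : ve - vc ≠ 0 := by
      intro h
      apply hce
      rw [sub_eq_zero] at h
      rw [h]
    obtain ⟨L, hL⟩ := exists_linEquiv (K := ZMod p) hu hw
    refine ⟨Tmap φ hz2 hzN hinv hgen L (vc - L va), ?_, ?_⟩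
    · rw [Tmap_iotz φ hz2 hzN hinv hgen]
      congr 2
      abel
    · rw [Tmap_iotz φ hz2 hzN hinv hgen]
      congr 2
      have : L vb - L va = ve - vc := by rw [← map_sub, hL]
      have h2 : L vb = ve - vc + L va := by
        rw [← this]; abel
      rw [h2]
      abel
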